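/- Leakage chain rule for quantum min-entropy: for any state ρ_AXB on A⊗X⊗B, H_min(A|XB)_ρ ≥ H_min(A|B)_ρ - 2 log dim(X). -/

import Mathlib

open Matrix Kronecker BigOperators Finset
open scoped ComplexOrder

/-- Trace distance: half the trace norm of the difference. -/
noncomputable def traceDist {d : Type*} [Fintype d] [DecidableEq d]
    (ρ σ : Matrix d d ℂ) : ℝ :=
  (let hA := Matrix.posSemidef_conjTranspose_mul_self (ρ - σ);
    ((hA.1.eigenvectorUnitary : Matrix d d ℂ) *
      diagonal (fun i => ((Real.sqrt (hA.1.eigenvalues i) : ℝ) : ℂ)) *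
      (star hA.1.eigenvectorUnitary : Matrix d d ℂ)).trace).re / 2

/-- A density operator: positive semidefinite with unit trace. -/
def IsDensity {d : Type*} [Fintype d] [DecidableEq d] (ρ : Matrix d d ℂ) : Prop :=
  ρ.PosSemidef ∧ ρ.trace = 1

/-- Rank-one projection `|v⟩⟨v|` onto a vector. -/
def proj {d : Type*} [Fintype d] [DecidableEq d] (v : d → ℂ) : Matrix d d ℂ :=
  Matrix.vecMulVec v (star v)

/-- A unit vector. -/
def IsUnit' {d : Type*} [Fintype d] (v : d → ℂ) : Prop :=
  dotProduct (star v) v = 1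

/-- Partial trace over the second tensor factor. -/
noncomputable def ptraceY {X Y : Type*} [Fintype X] [Fintype Y] [DecidableEq X] [DecidableEq Y]
    (ρ : Matrix (X × Y) (X × Y) ℂ) : Matrix X X ℂ :=
  fun x x' => ∑ y : Y, ρ (x, y) (x', y)

/-- Conditional quantum min-entropy:
`H_min(A|B)_ρ = -inf_{σ_B density} inf {λ : ρ_AB ≤ 2^λ I_A ⊗ σ_B}`. -/
noncomputable def condMinEntropy {A B : Type*} [Fintype A] [Fintype B]
    [DecidableEq A] [DecidableEq B] (ρ : Matrix (A × B) (A × B) ℂ) : ℝ :=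
  - sInf {lam : ℝ | ∃ σ : Matrix B B ℂ, IsDensity σ ∧
      (((2 : ℝ) ^ lam • ((1 : Matrix A A ℂ) ⊗ₖ σ)) - ρ).PosSemidef}

/-- A cq-state `Σ_a p(a) |a⟩⟨a| ⊗ ρ_B^a`. -/
noncomputable def cqState {A B : Type*} [Fintype A] [Fintype B]
    [DecidableEq A] [DecidableEq B]
    (p : A → ℝ) (ρB : A → Matrix B B ℂ) : Matrix (A × B) (A × B) ℂ :=
  ∑ a : A, (p a : ℂ) • (proj (fun x => if x = a then 1 else 0) ⊗ₖ ρB a)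

/-- Partial trace over the middle (`X`) system of a state on `A ⊗ X ⊗ B`. -/
noncomputable def ptraceMid {A X B : Type*} [Fintype A] [Fintype X] [Fintype B]
    [DecidableEq A] [DecidableEq X] [DecidableEq B]
    (ρ : Matrix (A × X × B) (A × X × B) ℂ) : Matrix (A × B) (A × B) ℂ :=
  fun ab ab' => ∑ x : X, ρ (ab.1, x, ab.2) (ab'.1, x, ab'.2)

set_option linter.unusedSectionVars false

namespace LCR
variable {A X B : Type*} [Fintype A] [Fintype X] [Fintype B]
  [DecidableEq A] [DecidableEq X] [DecidableEq B]



/-- quadratic form of `Cᴴ*C` is a nonneg real. -/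
lemma qf_eq {m n : Type*} [Fintype m] [Fintype n] (C : Matrix m n ℂ) (v : n → ℂ) :
    star v ⬝ᵥ (Cᴴ * C) *ᵥ v = ((∑ i, Complex.normSq ((C *ᵥ v) i) : ℝ) : ℂ) := by
  rw [← Matrix.mulVec_mulVec, Matrix.dotProduct_mulVec, ← Matrix.star_mulVec]
  simp [dotProduct, Pi.star_apply, mul_comm, Complex.mul_conj]

lemma real_smul_mat {n : Type*} (r : ℝ) (M : Matrix n n ℂ) :
    r • M = (r : ℂ) • M := by
  ext i j; simp [Matrix.smul_apply, Complex.real_smul]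

lemma posSemidef_real_smul {n : Type*} [Fintype n] {M : Matrix n n ℂ} (hM : M.PosSemidef)
    {r : ℝ} (hr : 0 ≤ r) : ((r : ℂ) • M).PosSemidef := by
  refine Matrix.PosSemidef.of_dotProduct_mulVec_nonneg ?_ fun v => ?_
  · have := hM.isHermitian
    rw [Matrix.IsHermitian] at this ⊢
    rw [Matrix.conjTranspose_smul, this]
    congr 1
    simp [Complex.star_def, Complex.conj_ofReal]
  · rw [Matrix.smul_mulVec, dotProduct_smul]
    exact mul_nonneg (Complex.zero_le_real.mpr hr) (hM.dotProduct_mulVec_nonneg v)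

/-- normSq of a sum is at most card times sum of normSq. -/
lemma normSq_sum_le {ι : Type*} [Fintype ι] (z : ι → ℂ) :
    Complex.normSq (∑ x, z x) ≤ (Fintype.card ι : ℝ) * ∑ x, Complex.normSq (z x) := by
  calc Complex.normSq (∑ x, z x) = ‖∑ x, z x‖^2 := (Complex.sq_norm _).symm
    _ ≤ (∑ x, ‖z x‖)^2 := by
        apply pow_le_pow_left₀ (norm_nonneg _)
        exact norm_sum_le _ _
    _ ≤ (Fintype.card ι : ℝ) * ∑ x, (‖z x‖)^2 := by
        simpa using sq_sum_le_card_mul_sum_sq (s := Finset.univ) (f := fun x => ‖z x‖)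
    _ = (Fintype.card ι : ℝ) * ∑ x, Complex.normSq (z x) := by simp [Complex.sq_norm]

/-- Cauchy-Schwarz for normSq. -/
lemma normSq_dotProduct_le {ι : Type*} [Fintype ι] (a b : ι → ℂ) :
    Complex.normSq (∑ j, a j * b j) ≤ (∑ j, Complex.normSq (a j)) * ∑ j, Complex.normSq (b j) := by
  calc Complex.normSq (∑ j, a j * b j) = ‖∑ j, a j * b j‖^2 := (Complex.sq_norm _).symm
    _ ≤ (∑ j, ‖a j‖ * ‖b j‖)^2 := by
        apply pow_le_pow_left₀ (norm_nonneg _)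
        refine le_trans (norm_sum_le _ _) ?_
        simp [norm_mul]
    _ ≤ (∑ j, (‖a j‖)^2) * ∑ j, (‖b j‖)^2 :=
        sum_mul_sq_le_sq_mul_sq _ _ _
    _ = (∑ j, Complex.normSq (a j)) * ∑ j, Complex.normSq (b j) := by simp [Complex.sq_norm]


open scoped MatrixOrder in
lemma psd_exists_mul_self {m : Type*} [Fintype m] {M : Matrix m m ℂ} (hM : M.PosSemidef) :
    ∃ C : Matrix m m ℂ, M = Cᴴ * C := by
  classical
  obtain ⟨C, hC⟩ := CStarAlgebra.nonneg_iff_eq_star_mul_self.mp hM.nonneg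
  exact ⟨C, hC⟩

def lift (y : X) (u : A × B → ℂ) : A × X × B → ℂ :=
  fun p => if p.2.1 = y then u (p.1, p.2.2) else 0

lemma qf_lift (ρ : Matrix (A × X × B) (A × X × B) ℂ) (y : X) (u : A × B → ℂ) :
    star (lift y u) ⬝ᵥ ρ *ᵥ lift y u
      = ∑ a, ∑ b, ∑ a', ∑ b', star (u (a,b)) * (ρ (a,y,b) (a',y,b') * u (a',b')) := by
  simp only [dotProduct, Matrix.mulVec, Pi.star_apply, Fintype.sum_prod_type, lift]
  rw [Finset.sum_comm]
  rw [Finset.sum_eq_single y]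
  · refine Finset.sum_congr rfl fun a _ => ?_
    refine Finset.sum_congr rfl fun b _ => ?_
    simp [mul_ite, Finset.mul_sum, Finset.sum_ite_eq']
  · intro x _ hx; simp [hx]
  · simp

lemma qf_ptraceMid (ρ : Matrix (A × X × B) (A × X × B) ℂ) (u : A × B → ℂ) :
    star u ⬝ᵥ (ptraceMid ρ) *ᵥ u = ∑ y : X, star (lift y u) ⬝ᵥ ρ *ᵥ lift y u := by
  simp only [qf_lift]
  simp only [dotProduct, Matrix.mulVec, ptraceMid, Pi.star_apply,
    Fintype.sum_prod_type, Finset.sum_mul, Finset.mul_sum]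
  conv_rhs => rw [Finset.sum_comm]
  refine Finset.sum_congr rfl fun a _ => ?_
  conv_rhs => rw [Finset.sum_comm]
  refine Finset.sum_congr rfl fun b _ => ?_
  conv_rhs => rw [Finset.sum_comm]
  refine Finset.sum_congr rfl fun a' _ => ?_
  conv_rhs => rw [Finset.sum_comm]


def midEmbed (X : Type*) [DecidableEq X] (N : Matrix (A × B) (A × B) ℂ) :
    Matrix (A × X × B) (A × X × B) ℂ :=
  fun p q => if p.2.1 = q.2.1 then N (p.1, p.2.2) (q.1, q.2.2) else 0

def slice (v : A × X × B → ℂ) (x : X) : A × B → ℂ := fun ab => v (ab.1, x, ab.2)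

lemma qf_midEmbed (N : Matrix (A × B) (A × B) ℂ) (v : A × X × B → ℂ) :
    star v ⬝ᵥ (midEmbed X N) *ᵥ v = ∑ x : X, star (slice v x) ⬝ᵥ N *ᵥ slice v x := by
  simp only [dotProduct, Matrix.mulVec, midEmbed, slice, Pi.star_apply,
    Fintype.sum_prod_type, ite_mul, zero_mul, mul_ite, mul_zero]
  rw [Finset.sum_comm]
  refine Finset.sum_congr rfl fun x _ => ?_
  refine Finset.sum_congr rfl fun a _ => ?_
  refine Finset.sum_congr rfl fun b _ => ?_
  congr 1
  refine Finset.sum_congr rfl fun a' _ => ?_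
  rw [Finset.sum_comm]
  simp

lemma midEmbed_isHermitian {N : Matrix (A × B) (A × B) ℂ} (hN : N.IsHermitian) :
    (midEmbed X N).IsHermitian := by
  ext p q
  rcases p with ⟨a, x, b⟩; rcases q with ⟨a', x', b'⟩
  simp only [Matrix.conjTranspose_apply, midEmbed]
  by_cases h : x = x'
  · subst h; simp [hN.apply]
  · simp [h, Ne.symm h]

lemma midEmbed_posSemidef {N : Matrix (A × B) (A × B) ℂ} (hN : N.PosSemidef) :
    (midEmbed X N).PosSemidef := by
  refine Matrix.PosSemidef.of_dotProduct_mulVec_nonneg (midEmbed_isHermitian hN.isHermitian) fun v => ?_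
  rw [qf_midEmbed]
  exact Finset.sum_nonneg fun x _ => hN.dotProduct_mulVec_nonneg _

lemma midEmbed_add (M N : Matrix (A × B) (A × B) ℂ) :
    midEmbed X (M + N) = midEmbed X M + midEmbed X N := by
  ext p q; simp only [midEmbed, Matrix.add_apply]; split <;> simp

lemma midEmbed_smul (c : ℂ) (N : Matrix (A × B) (A × B) ℂ) :
    midEmbed X (c • N) = c • midEmbed X N := by
  ext p q; simp only [midEmbed, Matrix.smul_apply, smul_eq_mul]; split <;> simp

lemma ptraceMid_isHermitian {ρ : Matrix (A × X × B) (A × X × B) ℂ} (hρ : ρ.IsHermitian) :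
    (ptraceMid ρ).IsHermitian := by
  ext p q
  rcases p with ⟨a, b⟩; rcases q with ⟨a', b'⟩
  simp only [Matrix.conjTranspose_apply, ptraceMid, star_sum]
  exact Finset.sum_congr rfl fun x _ => hρ.apply _ _

lemma ptraceMid_posSemidef {ρ : Matrix (A × X × B) (A × X × B) ℂ} (hρ : ρ.PosSemidef) :
    (ptraceMid ρ).PosSemidef := by
  refine Matrix.PosSemidef.of_dotProduct_mulVec_nonneg (ptraceMid_isHermitian hρ.isHermitian) fun u => ?_
  rw [qf_ptraceMid]
  exact Finset.sum_nonneg fun y _ => hρ.dotProduct_mulVec_nonneg _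

lemma trace_ptraceMid (ρ : Matrix (A × X × B) (A × X × B) ℂ) :
    (ptraceMid ρ).trace = ρ.trace := by
  simp only [Matrix.trace, Matrix.diag, ptraceMid, Fintype.sum_prod_type]
  refine Finset.sum_congr rfl fun a _ => ?_
  rw [Finset.sum_comm]

lemma mulVec_sum' {m n ι : Type*} [Fintype n] [Fintype ι] (C : Matrix m n ℂ) (u : ι → n → ℂ) :
    C *ᵥ (∑ x, u x) = ∑ x, C *ᵥ u x := by
  ext i
  simp only [Matrix.mulVec, dotProduct, Finset.sum_apply, Finset.mul_sum]
  rw [Finset.sum_comm]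

lemma nsq_nonneg {m : Type*} [Fintype m] (w : m → ℂ) : 0 ≤ ∑ i, Complex.normSq (w i) :=
  Finset.sum_nonneg fun i _ => Complex.normSq_nonneg _

lemma key_twirl {ρ : Matrix (A × X × B) (A × X × B) ℂ} (hρ : ρ.PosSemidef) :
    ((Fintype.card X : ℂ) • midEmbed X (ptraceMid ρ) - ρ).PosSemidef := by
  obtain ⟨C, hC⟩ := LCR.psd_exists_mul_self hρ
  refine Matrix.PosSemidef.of_dotProduct_mulVec_nonneg ?_ fun v => ?_
  · have hE := midEmbed_isHermitian (X := X) (ptraceMid_isHermitian hρ.isHermitian)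
    have h1 : ((Fintype.card X : ℂ) • midEmbed X (ptraceMid ρ)).IsHermitian := by
      rw [Matrix.IsHermitian, Matrix.conjTranspose_smul, hE.eq]
      congr 1
      simp
    exact h1.sub hρ.isHermitian
  · rw [Matrix.sub_mulVec, dotProduct_sub, Matrix.smul_mulVec,
      dotProduct_smul, qf_midEmbed]
    simp only [qf_ptraceMid]
    set u : X → X → (A × X × B → ℂ) := fun x y => lift y (slice v x) with hu
    have hv : v = ∑ x, u x x := by
      funext p
      rcases p with ⟨a, z, b⟩
      simp [hu, lift, slice, Finset.sum_apply, Finset.sum_ite_eq]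
    set n : (A × X × B → ℂ) → ℝ := fun t => ∑ i, Complex.normSq ((C *ᵥ t) i) with hn
    have hq : ∀ t : A × X × B → ℂ, star t ⬝ᵥ ρ *ᵥ t = ((n t : ℝ) : ℂ) := fun t => by
      rw [hC, qf_eq]
    rw [hq]
    have h2 : ∀ x : X, ∑ y : X, star (u x y) ⬝ᵥ ρ *ᵥ u x y = ((∑ y, n (u x y) : ℝ) : ℂ) := by
      intro x
      rw [Complex.ofReal_sum]
      exact Finset.sum_congr rfl fun y _ => hq _
    rw [Finset.sum_congr rfl fun x _ => h2 x, ← Complex.ofReal_sum, smul_eq_mul,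
      ← Complex.ofReal_natCast, ← Complex.ofReal_mul, ← Complex.ofReal_sub]
    rw [Complex.zero_le_real]
    -- real inequality
    have step1 : n v ≤ (Fintype.card X : ℝ) * ∑ x, n (u x x) := by
      have hCv : C *ᵥ v = ∑ x, C *ᵥ u x x := by rw [hv, mulVec_sum']
      calc n v = ∑ i, Complex.normSq (∑ x, (C *ᵥ u x x) i) := by
            simp only [hn, hCv, Finset.sum_apply]
        _ ≤ ∑ i, (Fintype.card X : ℝ) * ∑ x, Complex.normSq ((C *ᵥ u x x) i) :=
            Finset.sum_le_sum fun i _ => normSq_sum_le _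
        _ = (Fintype.card X : ℝ) * ∑ x, n (u x x) := by
            rw [← Finset.mul_sum, Finset.sum_comm]
    have step2 : ∑ x, n (u x x) ≤ ∑ x, ∑ y, n (u x y) :=
      Finset.sum_le_sum fun x _ =>
        Finset.single_le_sum (f := fun y => n (u x y)) (fun y _ => nsq_nonneg _) (Finset.mem_univ x)
    have := step1.trans (by
      have h3 : (0:ℝ) ≤ (Fintype.card X : ℝ) := Nat.cast_nonneg _
      exact mul_le_mul_of_nonneg_left step2 h3)
    linarith

lemma trace_eq_real {m : Type*} [Fintype m] {M : Matrix m m ℂ} (hM : M.PosSemidef) :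
    ∃ t : ℝ, 0 ≤ t ∧ M.trace = (t : ℂ) := by
  obtain ⟨C, hC⟩ := LCR.psd_exists_mul_self hM
  refine ⟨∑ j, ∑ i, Complex.normSq (C i j), Finset.sum_nonneg fun j _ =>
    Finset.sum_nonneg fun i _ => Complex.normSq_nonneg _, ?_⟩
  rw [hC]
  simp only [Matrix.trace, Matrix.diag, Matrix.mul_apply, Matrix.conjTranspose_apply]
  push_cast
  refine Finset.sum_congr rfl fun j _ => Finset.sum_congr rfl fun i _ => ?_
  simp [Complex.star_def, mul_comm, Complex.mul_conj]

lemma one_sub_posSemidef {m : Type*} [Fintype m] [DecidableEq m] {M : Matrix m m ℂ}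
    (hM : M.PosSemidef) (htr : M.trace = 1) : ((1 : Matrix m m ℂ) - M).PosSemidef := by
  obtain ⟨C, hC⟩ := LCR.psd_exists_mul_self hM
  set t : ℝ := ∑ i, ∑ j, Complex.normSq (C i j) with ht
  have htrC : M.trace = (t : ℂ) := by
    rw [hC]
    simp only [Matrix.trace, Matrix.diag, Matrix.mul_apply, Matrix.conjTranspose_apply, ht]
    push_cast
    rw [Finset.sum_comm]
    refine Finset.sum_congr rfl fun j _ => Finset.sum_congr rfl fun i _ => ?_
    simp [Complex.star_def, mul_comm, Complex.mul_conj]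
  have ht1 : t = 1 := by
    have := htrC.symm.trans htr
    exact_mod_cast this
  refine Matrix.PosSemidef.of_dotProduct_mulVec_nonneg ((Matrix.isHermitian_one).sub hM.isHermitian) fun v => ?_
  rw [Matrix.sub_mulVec, dotProduct_sub, Matrix.one_mulVec]
  have h1 : star v ⬝ᵥ v = ((∑ j, Complex.normSq (v j) : ℝ) : ℂ) := by
    simp only [dotProduct, Pi.star_apply]
    push_cast
    refine Finset.sum_congr rfl fun j _ => ?_
    simp [Complex.star_def, mul_comm, Complex.mul_conj]
  rw [h1, hC, qf_eq, ← Complex.ofReal_sub, Complex.zero_le_real]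
  have hcs : ∑ i, Complex.normSq ((C *ᵥ v) i) ≤ t * ∑ j, Complex.normSq (v j) := by
    calc ∑ i, Complex.normSq ((C *ᵥ v) i)
        ≤ ∑ i, (∑ j, Complex.normSq (C i j)) * ∑ j, Complex.normSq (v j) :=
          Finset.sum_le_sum fun i _ => normSq_dotProduct_le _ _
      _ = t * ∑ j, Complex.normSq (v j) := by rw [← Finset.sum_mul]
  rw [ht1] at hcs
  linarith

lemma qf_oneKron {Y m : Type*} [Fintype Y] [Fintype m] [DecidableEq Y] [DecidableEq m]
    (σ : Matrix m m ℂ) (v : Y × m → ℂ) :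
    star v ⬝ᵥ ((1 : Matrix Y Y ℂ) ⊗ₖ σ) *ᵥ v
      = ∑ y : Y, star (fun b => v (y, b)) ⬝ᵥ σ *ᵥ (fun b => v (y, b)) := by
  simp only [dotProduct, Matrix.mulVec, Matrix.kroneckerMap_apply, Matrix.one_apply,
    Pi.star_apply, Fintype.sum_prod_type, ite_mul, zero_mul, mul_ite, mul_zero, one_mul]
  refine Finset.sum_congr rfl fun y _ => Finset.sum_congr rfl fun b _ => ?_
  congr 1
  rw [Finset.sum_comm]
  simp [Finset.sum_ite_eq]

lemma oneKron_posSemidef {Y m : Type*} [Fintype Y] [Fintype m] [DecidableEq Y] [DecidableEq m]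
    {σ : Matrix m m ℂ} (hσ : σ.PosSemidef) : ((1 : Matrix Y Y ℂ) ⊗ₖ σ).PosSemidef := by
  refine Matrix.PosSemidef.of_dotProduct_mulVec_nonneg ?_ fun v => ?_
  · ext p q
    rcases p with ⟨y, b⟩; rcases q with ⟨y', b'⟩
    simp only [Matrix.conjTranspose_apply, Matrix.kroneckerMap_apply, Matrix.one_apply]
    by_cases h : y = y'
    · subst h; simp [hσ.isHermitian.apply]
    · simp [h, Ne.symm h]
  · rw [qf_oneKron]
    exact Finset.sum_nonneg fun y _ => hσ.dotProduct_mulVec_nonneg _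

lemma midEmbed_oneKron (σ : Matrix B B ℂ) :
    midEmbed X ((1 : Matrix A A ℂ) ⊗ₖ σ) = (1 : Matrix A A ℂ) ⊗ₖ ((1 : Matrix X X ℂ) ⊗ₖ σ) := by
  ext p q
  rcases p with ⟨a, x, b⟩; rcases q with ⟨a', x', b'⟩
  simp only [midEmbed, Matrix.kroneckerMap_apply, Matrix.one_apply]
  by_cases h : x = x' <;> simp [h]

end LCR

/-- Leakage chain rule for quantum min-entropy:
`H_min(A|XB)_ρ ≥ H_min(A|B)_ρ - 2 log₂ dim(X)`. -/
theorem leakage_chain_rule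
    {A X B : Type*} [Fintype A] [Fintype X] [Fintype B]
    [DecidableEq A] [DecidableEq X] [DecidableEq B]
    (ρ : Matrix (A × X × B) (A × X × B) ℂ) (hρ : IsDensity ρ) :
    condMinEntropy (A := A) (B := X × B) ρ ≥
      condMinEntropy (ptraceMid ρ) - 2 * Real.logb 2 (Fintype.card X) := by
  obtain ⟨hPSD, htr⟩ := hρ
  have hne : Nonempty (A × X × B) := by
    by_contra h
    rw [not_nonempty_iff] at h
    rw [show ρ.trace = 0 from by simp [Matrix.trace]] at htr
    exact zero_ne_one htr
  obtain ⟨a₀, x₀, b₀⟩ := hne.some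
  haveI : Nonempty A := ⟨a₀⟩
  haveI : Nonempty X := ⟨x₀⟩
  haveI : Nonempty B := ⟨b₀⟩
  have hdX : 0 < (Fintype.card X : ℝ) := by exact_mod_cast Fintype.card_pos
  have hdA : 0 < (Fintype.card A : ℝ) := by exact_mod_cast Fintype.card_pos
  have hdB : 0 < (Fintype.card B : ℝ) := by exact_mod_cast Fintype.card_pos
  set c : ℝ := 2 * Real.logb 2 (Fintype.card X) with hc
  have hAB_psd : (ptraceMid ρ).PosSemidef := LCR.ptraceMid_posSemidef hPSD
  have hAB_tr : (ptraceMid ρ).trace = 1 := (LCR.trace_ptraceMid ρ).trans htr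
  set S1 : Set ℝ := {lam : ℝ | ∃ σ : Matrix (X × B) (X × B) ℂ, IsDensity σ ∧
      (((2 : ℝ) ^ lam • ((1 : Matrix A A ℂ) ⊗ₖ σ)) - ρ).PosSemidef} with hS1
  set S2 : Set ℝ := {lam : ℝ | ∃ σ : Matrix B B ℂ, IsDensity σ ∧
      (((2 : ℝ) ^ lam • ((1 : Matrix A A ℂ) ⊗ₖ σ)) - ptraceMid ρ).PosSemidef} with hS2
  -- S2 is nonempty
  have hS2ne : S2.Nonempty := by
    refine ⟨Real.logb 2 (Fintype.card B),
      (((Fintype.card B : ℝ)⁻¹ : ℝ) : ℂ) • (1 : Matrix B B ℂ), ⟨?_, ?_⟩, ?_⟩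
    · exact LCR.posSemidef_real_smul Matrix.PosSemidef.one (by positivity)
    · rw [Matrix.trace_smul, Matrix.trace_one, smul_eq_mul]
      push_cast
      field_simp
    · have h2 : (2:ℝ) ^ Real.logb 2 (Fintype.card B) = (Fintype.card B : ℝ) :=
        Real.rpow_logb (by norm_num) (by norm_num) hdB
      have key : ((2 : ℝ) ^ Real.logb 2 (Fintype.card B) •
          ((1 : Matrix A A ℂ) ⊗ₖ ((((Fintype.card B : ℝ)⁻¹ : ℝ) : ℂ) • (1 : Matrix B B ℂ))))
          = (1 : Matrix (A × B) (A × B) ℂ) := by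
        rw [Matrix.kronecker_smul, Matrix.one_kronecker_one, LCR.real_smul_mat, smul_smul, h2]
        rw [show ((((Fintype.card B : ℝ)) : ℂ) * (((Fintype.card B : ℝ)⁻¹ : ℝ) : ℂ)) = 1 by
          push_cast; field_simp]
        rw [one_smul]
      rw [key]
      exact LCR.one_sub_posSemidef hAB_psd hAB_tr
  -- S1 is bounded below
  have hbdd : BddBelow S1 := by
    refine ⟨- Real.logb 2 (Fintype.card A), fun lam hlam => ?_⟩
    obtain ⟨σ, hσ, hpsd⟩ := hlam
    obtain ⟨t, ht0, htr'⟩ := LCR.trace_eq_real hpsd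
    have htrace : (((2:ℝ) ^ lam • ((1 : Matrix A A ℂ) ⊗ₖ σ)) - ρ).trace
        = ((((2:ℝ) ^ lam * Fintype.card A - 1 : ℝ)) : ℂ) := by
      rw [Matrix.trace_sub, LCR.real_smul_mat, Matrix.trace_smul, Matrix.trace_kronecker,
        Matrix.trace_one, hσ.2, htr, smul_eq_mul]
      push_cast
      ring
    have heq : (2:ℝ) ^ lam * Fintype.card A - 1 = t := by
      have := htrace.symm.trans htr'
      exact_mod_cast this
    have h1 : (Fintype.card A : ℝ)⁻¹ ≤ (2:ℝ) ^ lam := by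
      rw [inv_le_iff_one_le_mul₀ hdA]
      nlinarith
    have h2 : (2:ℝ) ^ (- Real.logb 2 (Fintype.card A)) = (Fintype.card A : ℝ)⁻¹ := by
      rw [Real.rpow_neg (by norm_num), Real.rpow_logb (by norm_num) (by norm_num) hdA]
    rw [← h2] at h1
    exact (Real.rpow_le_rpow_left_iff (by norm_num)).mp h1
  -- main inclusion
  have hincl : ∀ lam ∈ S2, lam + c ∈ S1 := by
    intro lam hlam
    obtain ⟨σ, hσ, hpsd⟩ := hlam
    refine ⟨(((Fintype.card X : ℝ)⁻¹ : ℝ) : ℂ) • ((1 : Matrix X X ℂ) ⊗ₖ σ), ⟨?_, ?_⟩, ?_⟩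
    · exact LCR.posSemidef_real_smul (LCR.oneKron_posSemidef hσ.1) (by positivity)
    · rw [Matrix.trace_smul, Matrix.trace_kronecker, Matrix.trace_one, hσ.2, smul_eq_mul]
      push_cast
      field_simp
    · have h2c : (2:ℝ) ^ c = (Fintype.card X : ℝ) ^ 2 := by
        rw [hc, mul_comm, Real.rpow_mul (by norm_num : (0:ℝ) ≤ 2),
          Real.rpow_logb (by norm_num) (by norm_num) hdX, Real.rpow_two]
      have hscal : (2:ℝ) ^ (lam + c) * (Fintype.card X : ℝ)⁻¹
          = (Fintype.card X : ℝ) * (2:ℝ) ^ lam := by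
        rw [Real.rpow_add (by norm_num), h2c]
        field_simp
      have hsc : (((2:ℝ) ^ (lam + c) : ℝ) : ℂ) * (((Fintype.card X : ℝ)⁻¹ : ℝ) : ℂ)
          = (Fintype.card X : ℂ) * (((2:ℝ) ^ lam : ℝ) : ℂ) := by
        rw [← Complex.ofReal_mul, hscal]
        push_cast
        ring
      have hmat : (2:ℝ) ^ (lam + c) •
            ((1 : Matrix A A ℂ) ⊗ₖ ((((Fintype.card X : ℝ)⁻¹ : ℝ) : ℂ) • ((1 : Matrix X X ℂ) ⊗ₖ σ))) - ρ
          = (Fintype.card X : ℂ) •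
              LCR.midEmbed X ((2:ℝ) ^ lam • ((1 : Matrix A A ℂ) ⊗ₖ σ) - ptraceMid ρ)
            + ((Fintype.card X : ℂ) • LCR.midEmbed X (ptraceMid ρ) - ρ) := by
        rw [add_sub, ← smul_add, ← LCR.midEmbed_add, sub_add_cancel,
          LCR.real_smul_mat ((2:ℝ)^lam), LCR.midEmbed_smul, LCR.midEmbed_oneKron,
          LCR.real_smul_mat ((2:ℝ)^(lam+c)), Matrix.kronecker_smul, smul_smul, smul_smul, hsc]
      rw [hmat]
      refine Matrix.PosSemidef.add ?_ (LCR.key_twirl hPSD)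
      have h4 := LCR.posSemidef_real_smul (LCR.midEmbed_posSemidef (X := X) hpsd)
        (le_of_lt hdX)
      rw [Complex.ofReal_natCast] at h4
      exact h4
  -- conclude
  have hle : ∀ lam ∈ S2, sInf S1 ≤ lam + c := fun lam h => csInf_le hbdd (hincl lam h)
  have h3 : sInf S1 - c ≤ sInf S2 := le_csInf hS2ne fun lam h => by linarith [hle lam h]
  show - sInf S1 ≥ - sInf S2 - c
  linarith
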